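/- Let k ≥ 2 and let (z_j)_{0≤j≤k} be an increasing kη-quasi-arithmetic progression with δ = z₁ - z₀ > 0 and kη < 1/4. Then for each j ∈ {0,…,k}, the Lagrange weight u_j = ∏_{i≠j} 1/(z_i - z_j) satisfies |u_j| ≤ (1-kη)^{-k} δ^{-k} / (j!(k-j)!) < (2/k!)·C(k,j)·δ^{-k}, where C(k,j) is the binomial coefficient, provided (1-kη)^{-k} < 2. -/

import Mathlib

lemma auxA (j : ℕ) : ∏ i ∈ Finset.range j, (j - i) = j.factorial := by
  induction j with
  | zero => simp
  | succ n ih =>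
    rw [Finset.prod_range_succ']
    simp only [Nat.succ_sub_succ]
    rw [ih]
    simp [Nat.factorial_succ, Nat.mul_comm]

lemma auxB (j k : ℕ) (hj : j ≤ k) :
    ∏ i ∈ Finset.Ico (j + 1) (k + 1), (i - j) = (k - j).factorial := by
  rw [Finset.prod_Ico_eq_prod_range]
  have h1 : k + 1 - (j + 1) = k - j := by omega
  rw [h1]
  have h2 : ∀ i, j + 1 + i - j = i + 1 := by omega
  simp only [h2]
  exact Finset.prod_range_add_one_eq_factorial _

lemma auxC (j k : ℕ) (hj : j ≤ k) :
    ∏ i ∈ (Finset.range (k + 1)).erase j, Nat.dist i j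
      = j.factorial * (k - j).factorial := by
  have hset : (Finset.range (k + 1)).erase j
      = Finset.range j ∪ Finset.Ico (j + 1) (k + 1) := by
    ext i
    simp only [Finset.mem_erase, Finset.mem_range, Finset.mem_union, Finset.mem_Ico]
    omega
  have hdisj : Disjoint (Finset.range j) (Finset.Ico (j + 1) (k + 1)) := by
    rw [Finset.disjoint_left]
    intro a ha hb
    simp only [Finset.mem_range] at ha
    simp only [Finset.mem_Ico] at hb
    omega
  rw [hset, Finset.prod_union hdisj]
  have e1 : ∏ i ∈ Finset.range j, Nat.dist i j = j.factorial := by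
    rw [← auxA j]
    apply Finset.prod_congr rfl
    intro i hi
    simp only [Finset.mem_range] at hi
    exact Nat.dist_eq_sub_of_le (le_of_lt hi)
  have e2 : ∏ i ∈ Finset.Ico (j + 1) (k + 1), Nat.dist i j = (k - j).factorial := by
    rw [← auxB j k hj]
    apply Finset.prod_congr rfl
    intro i hi
    simp only [Finset.mem_Ico] at hi
    exact Nat.dist_eq_sub_of_le_right (by omega)
  rw [e1, e2]

theorem stmt19 (k : ℕ) (hk : 2 ≤ k) (η δ : ℝ) (hδ : 0 < δ) (hη : 0 < η)
    (hkη : (k : ℝ) * η < 1 / 4)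
    (z : ℕ → ℝ) (hz01 : z 1 - z 0 = δ)
    (hqap : ∀ i ≤ k, ∀ j ≤ k, i ≠ j →
      (1 - (k : ℝ) * η) * |(i : ℝ) - j| * δ < |z i - z j| ∧
        |z i - z j| < (1 + (k : ℝ) * η) * |(i : ℝ) - j| * δ)
    (hpow : ((1 - (k : ℝ) * η) ^ k)⁻¹ < 2)
    (j : ℕ) (hj : j ≤ k) :
    |∏ i ∈ (Finset.range (k + 1)).erase j, (z i - z j)⁻¹| ≤
        ((1 - (k : ℝ) * η) ^ k)⁻¹ * (δ ^ k)⁻¹ /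
          ((j.factorial : ℝ) * (k - j).factorial) ∧
      ((1 - (k : ℝ) * η) ^ k)⁻¹ * (δ ^ k)⁻¹ /
          ((j.factorial : ℝ) * (k - j).factorial) <
        2 / (k.factorial : ℝ) * (k.choose j) * (δ ^ k)⁻¹ := by
  have ht : 0 < 1 - (k : ℝ) * η := by linarith
  constructor
  · -- first part
    rw [Finset.abs_prod]
    have hstep : ∀ i ∈ (Finset.range (k + 1)).erase j,
        |(z i - z j)⁻¹| ≤ ((1 - (k : ℝ) * η) * |(i : ℝ) - j| * δ)⁻¹ := by
      intro i hi
      rw [Finset.mem_erase, Finset.mem_range] at hi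
      obtain ⟨hij, hik⟩ := hi
      have h := (hqap i (by omega) j hj hij).1
      have habs : (0 : ℝ) < |(i : ℝ) - j| := by
        rw [abs_pos]
        intro hcontra
        exact hij (by exact_mod_cast sub_eq_zero.mp hcontra)
      have hlb : 0 < (1 - (k : ℝ) * η) * |(i : ℝ) - j| * δ := by positivity
      rw [abs_inv]
      exact inv_anti₀ hlb h.le
    calc ∏ i ∈ (Finset.range (k + 1)).erase j, |(z i - z j)⁻¹|
        ≤ ∏ i ∈ (Finset.range (k + 1)).erase j,
            ((1 - (k : ℝ) * η) * |(i : ℝ) - j| * δ)⁻¹ :=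
          Finset.prod_le_prod (fun i _ => abs_nonneg _) hstep
      _ = ((1 - (k : ℝ) * η) ^ k)⁻¹ * (δ ^ k)⁻¹ /
          ((j.factorial : ℝ) * (k - j).factorial) := by
          have hcard : ((Finset.range (k + 1)).erase j).card = k := by
            rw [Finset.card_erase_of_mem (by simp [Finset.mem_range]; omega)]
            simp
          have hd : ∀ i ∈ (Finset.range (k + 1)).erase j,
              |(i : ℝ) - j| = (Nat.dist i j : ℝ) := by
            intro i _
            rcases le_total i j with h | h
            · rw [Nat.dist_eq_sub_of_le h, abs_sub_comm,
                abs_of_nonneg (sub_nonneg.2 (Nat.cast_le.2 h))]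
              push_cast [h]
              ring
            · rw [Nat.dist_eq_sub_of_le_right h,
                abs_of_nonneg (sub_nonneg.2 (Nat.cast_le.2 h))]
              push_cast [h]
              ring
          have : ∏ i ∈ (Finset.range (k + 1)).erase j,
              ((1 - (k : ℝ) * η) * |(i : ℝ) - j| * δ)⁻¹
              = ∏ i ∈ (Finset.range (k + 1)).erase j,
                (((1 - (k : ℝ) * η))⁻¹ * δ⁻¹ * ((Nat.dist i j : ℝ))⁻¹) := by
            apply Finset.prod_congr rfl
            intro i hi
            rw [hd i hi]
            rw [mul_inv, mul_inv]
            ring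
          rw [this, Finset.prod_mul_distrib, Finset.prod_const, hcard,
            Finset.prod_inv_distrib, ← Nat.cast_prod, auxC j k hj]
          push_cast
          rw [mul_pow, mul_inv, div_eq_mul_inv]
          ring
  · -- second part
    have hfacpos : (0 : ℝ) < (j.factorial : ℝ) * (k - j).factorial := by positivity
    have hδk : (0 : ℝ) < (δ ^ k)⁻¹ := by positivity
    have hch : (k.choose j : ℝ) * ((j.factorial : ℝ) * (k - j).factorial)
        = (k.factorial : ℝ) := by
      rw [← mul_assoc]
      exact_mod_cast congrArg (Nat.cast (R := ℝ))
        (Nat.choose_mul_factorial_mul_factorial hj)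
    have hkfac : (0 : ℝ) < (k.factorial : ℝ) := by positivity
    rw [div_lt_iff₀ hfacpos]
    have key : 2 / (k.factorial : ℝ) * (k.choose j) *
        ((j.factorial : ℝ) * (k - j).factorial) = 2 := by
      field_simp
      linear_combination hch
    have : 2 / (k.factorial : ℝ) * (k.choose j) * (δ ^ k)⁻¹ *
        ((j.factorial : ℝ) * (k - j).factorial)
        = 2 * (δ ^ k)⁻¹ := by
      calc 2 / (k.factorial : ℝ) * (k.choose j) * (δ ^ k)⁻¹ *
          ((j.factorial : ℝ) * (k - j).factorial)
          = 2 / (k.factorial : ℝ) * (k.choose j) *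
            ((j.factorial : ℝ) * (k - j).factorial) * (δ ^ k)⁻¹ := by ring
        _ = 2 * (δ ^ k)⁻¹ := by rw [key]
    rw [this]
    have := mul_lt_mul_of_pos_right hpow hδk
    linarith
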